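/- The number of 3-2-1-avoiding permutations of [n] equals the Catalan number C_n = binomial(2n,n)/(n+1). -/

import Mathlib

def Avoids321 {n : ℕ} (π : Equiv.Perm (Fin n)) : Prop :=
  ¬ ∃ i j k : Fin n, i < j ∧ j < k ∧ π k < π j ∧ π j < π i

open Finset

/-- Staircase functions: monotone `f : Fin n → Fin n` with `i ≤ f i`. -/
def Stair (n : ℕ) : Type := {f : Fin n → Fin n // Monotone f ∧ ∀ i, i ≤ f i}

instance (n : ℕ) : Finite (Stair n) := by unfold Stair; infer_instance

/-- Glue two staircase functions into a staircase function on `Fin (n+1)` with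
first "diagonal return" at `j`. -/
def stairGlue {n : ℕ} (j : Fin (n + 1)) (g : Stair j) (h : Stair (n - (j : ℕ))) :
    Stair (n + 1) :=
  ⟨fun i =>
    if hi : (i : ℕ) < (j : ℕ) then
      ⟨(g.1 ⟨i, hi⟩ : ℕ) + 1, by have := (g.1 ⟨i, hi⟩).isLt; have := j.isLt; omega⟩
    else if hi' : (i : ℕ) = (j : ℕ) then i
    else
      ⟨(h.1 ⟨(i : ℕ) - (j : ℕ) - 1, by have := i.isLt; omega⟩ : ℕ) + (j : ℕ) + 1, by
        have := (h.1 ⟨(i : ℕ) - (j : ℕ) - 1, by have := i.isLt; omega⟩).isLt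
        have := j.isLt; omega⟩, by
    -- monotone
    intro a b hab
    have hab' : (a : ℕ) ≤ (b : ℕ) := hab
    simp only [Fin.le_def]
    split_ifs with h1 h2 h3 h4 h5 h6 h7 h8 <;>
      (try simp only [Fin.val_mk]) <;>
      [skip; skip; skip; omega; omega; skip; omega; omega; skip]
    · -- a<j, b<j : use g monotone
      have hg := g.2.1 (show (⟨a, h1⟩ : Fin j) ≤ ⟨b, h2⟩ from by
        simp only [Fin.le_def]; exact hab')
      simp only [Fin.le_def] at hg; omega
    · -- a<j, b=j
      have := (g.1 ⟨a, h1⟩).isLt; omega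
    · -- a<j, b>j
      have := (g.1 ⟨a, h1⟩).isLt; omega
    · -- a=j, b>j
      omega
    · -- a>j, b>j : use h monotone
      have hh := h.2.1 (show (⟨(a:ℕ) - (j:ℕ) - 1, by have := a.isLt; omega⟩ :
          Fin (n - (j:ℕ))) ≤ ⟨(b:ℕ) - (j:ℕ) - 1, by have := b.isLt; omega⟩ from by
        simp only [Fin.le_def]; omega)
      simp only [Fin.le_def] at hh; omega, by
    -- i ≤ f i
    intro a
    simp only [Fin.le_def]
    split_ifs with h1 h2 <;> (try simp only [Fin.val_mk])
    · have hg := g.2.2 ⟨a, h1⟩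
      simp only [Fin.le_def] at hg; omega
    · omega
    · have hh := h.2.2 ⟨(a : ℕ) - (j : ℕ) - 1, by have := a.isLt; omega⟩
      simp only [Fin.le_def] at hh
      have := a.isLt; omega⟩

/-- Fixed points of a staircase function on `Fin (n+1)`. -/
def stairFix {n : ℕ} (f : Stair (n + 1)) : Finset (Fin (n + 1)) :=
  univ.filter fun i => f.1 i = i

lemma stairFix_nonempty {n : ℕ} (f : Stair (n + 1)) : (stairFix f).Nonempty :=
  ⟨Fin.last n, by
    simp only [stairFix, mem_filter, mem_univ, true_and]
    exact le_antisymm (Fin.le_last _) (f.2.2 _)⟩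

def minFix {n : ℕ} (f : Stair (n + 1)) : Fin (n + 1) :=
  (stairFix f).min' (stairFix_nonempty f)

lemma minFix_fix {n : ℕ} (f : Stair (n + 1)) : f.1 (minFix f) = minFix f := by
  have := (stairFix f).min'_mem (stairFix_nonempty f)
  simpa [stairFix, minFix] using this

lemma lt_of_lt_minFix {n : ℕ} (f : Stair (n + 1)) {i : Fin (n + 1)}
    (hi : i < minFix f) : (i : ℕ) < (f.1 i : ℕ) := by
  have h1 : (i : ℕ) ≤ (f.1 i : ℕ) := f.2.2 i
  rcases eq_or_lt_of_le h1 with h | h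
  · exfalso
    have hmem : i ∈ stairFix f := by
      simp only [stairFix, mem_filter, mem_univ, true_and]
      exact Fin.ext h.symm
    exact absurd ((stairFix f).min'_le _ hmem) (not_le.2 hi)
  · exact h

lemma minFix_stairGlue {n : ℕ} (j : Fin (n + 1)) (g : Stair j) (h : Stair (n - (j : ℕ))) :
    minFix (stairGlue j g h) = j := by
  have hjmem : j ∈ stairFix (stairGlue j g h) := by
    simp only [stairFix, mem_filter, mem_univ, true_and]
    simp only [stairGlue]
    rw [dif_neg (lt_irrefl _)]
    simp
  refine le_antisymm ((stairFix _).min'_le _ hjmem) ?_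
  refine Finset.le_min' _ _ _ fun i hi => ?_
  by_contra hij
  push_neg at hij
  have hij' : (i : ℕ) < (j : ℕ) := hij
  simp only [stairFix, mem_filter, mem_univ, true_and] at hi
  simp only [stairGlue] at hi
  rw [dif_pos hij'] at hi
  have hg := g.2.2 ⟨i, hij'⟩
  simp only [Fin.le_def] at hg
  have heq := Fin.ext_iff.1 hi
  simp only [Fin.val_mk] at heq
  omega

/-- The left part of a staircase function. -/
def stairLeft {n : ℕ} (f : Stair (n + 1)) : Stair (minFix f : ℕ) :=
  ⟨fun i =>
    ⟨(f.1 ⟨i, i.isLt.trans (minFix f).isLt⟩ : ℕ) - 1, by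
      have h1 : f.1 ⟨i, i.isLt.trans (minFix f).isLt⟩ ≤ f.1 (minFix f) :=
        f.2.1 (by simp only [Fin.le_def]; exact le_of_lt i.isLt)
      rw [minFix_fix] at h1
      have h2 := lt_of_lt_minFix f (show (⟨i, i.isLt.trans (minFix f).isLt⟩ : Fin (n+1)) < minFix f
        from i.isLt)
      simp only [Fin.le_def] at h1
      simp only [Fin.val_mk] at h1 h2
      omega⟩, by
    intro a b hab
    simp only [Fin.le_def, Fin.val_mk]
    have hm := f.2.1 (show (⟨a, a.isLt.trans (minFix f).isLt⟩ : Fin (n+1)) ≤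
      ⟨b, b.isLt.trans (minFix f).isLt⟩ from by
        simp only [Fin.le_def, Fin.val_mk]; exact hab)
    simp only [Fin.le_def, Fin.val_mk] at hm; omega, by
    intro a
    simp only [Fin.le_def, Fin.val_mk]
    have hlt := lt_of_lt_minFix f (show (⟨a, a.isLt.trans (minFix f).isLt⟩ : Fin (n+1)) < minFix f
      from a.isLt)
    simp only [Fin.val_mk] at hlt; omega⟩

/-- The right part of a staircase function. -/
def stairRight {n : ℕ} (f : Stair (n + 1)) : Stair (n - (minFix f : ℕ)) :=
  ⟨fun i =>
    ⟨(f.1 ⟨(minFix f : ℕ) + 1 + i, by have := i.isLt; omega⟩ : ℕ) - ((minFix f : ℕ) + 1), by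
      have h1 := (f.1 ⟨(minFix f : ℕ) + 1 + i, by have := i.isLt; omega⟩).isLt
      have h2 := f.2.2 ⟨(minFix f : ℕ) + 1 + i, by have := i.isLt; omega⟩
      simp only [Fin.le_def, Fin.val_mk] at h2
      have := i.isLt; omega⟩, by
    intro a b hab
    have hab' : (a : ℕ) ≤ (b : ℕ) := hab
    simp only [Fin.le_def, Fin.val_mk]
    have hm := f.2.1 (show (⟨(minFix f : ℕ) + 1 + a, by have := a.isLt; omega⟩ : Fin (n+1)) ≤
      ⟨(minFix f : ℕ) + 1 + b, by have := b.isLt; omega⟩ from by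
        simp only [Fin.le_def, Fin.val_mk]; omega)
    simp only [Fin.le_def, Fin.val_mk] at hm; omega, by
    intro a
    simp only [Fin.le_def, Fin.val_mk]
    have h2 := f.2.2 ⟨(minFix f : ℕ) + 1 + a, by have := a.isLt; omega⟩
    simp only [Fin.le_def, Fin.val_mk] at h2; omega⟩

lemma stairGlue_split {n : ℕ} (f : Stair (n + 1)) :
    stairGlue (minFix f) (stairLeft f) (stairRight f) = f := by
  apply Subtype.ext
  funext i
  apply Fin.ext
  simp only [stairGlue]
  split_ifs with h1 h2
  · -- i < minFix
    have hval : ((stairLeft f).1 ⟨(i:ℕ), h1⟩ : ℕ) = (f.1 ⟨(i:ℕ), i.isLt⟩ : ℕ) - 1 := rfl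
    have hcongr : f.1 ⟨(i:ℕ), i.isLt⟩ = f.1 i := by congr 1
    have hcv : (f.1 ⟨(i:ℕ), i.isLt⟩ : ℕ) = (f.1 i : ℕ) := by rw [hcongr]
    have hlt := lt_of_lt_minFix f (show (⟨(i:ℕ), i.isLt⟩ : Fin (n+1)) < minFix f from h1)
    simp only [Fin.val_mk]
    omega
  · -- i = minFix
    have hi : i = minFix f := Fin.ext h2
    rw [hi, minFix_fix]
  · -- i > minFix
    have hilt : (i:ℕ) - (minFix f : ℕ) - 1 < n - (minFix f : ℕ) := by have := i.isLt; omega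
    have hval : ((stairRight f).1 ⟨(i:ℕ) - (minFix f : ℕ) - 1, hilt⟩ : ℕ) =
        (f.1 ⟨(minFix f : ℕ) + 1 + ((i:ℕ) - (minFix f : ℕ) - 1), by
          have := i.isLt; omega⟩ : ℕ) - ((minFix f : ℕ) + 1) := rfl
    have hcongr : f.1 ⟨(minFix f : ℕ) + 1 + ((i:ℕ) - (minFix f : ℕ) - 1), by
        have := i.isLt; omega⟩ = f.1 i := by
      exact congrArg f.1 (Fin.ext (by first | omega | (simp only [Fin.val_mk]; omega)))
    have hcv := Fin.ext_iff.1 hcongr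
    have h2' := f.2.2 i
    simp only [Fin.le_def] at h2'
    simp only [Fin.val_mk]
    omega

def stairSigmaMap {n : ℕ} (x : Σ j : Fin (n + 1), Stair j × Stair (n - (j : ℕ))) :
    Stair (n + 1) :=
  stairGlue x.1 x.2.1 x.2.2

lemma stairSigmaMap_bijective {n : ℕ} : Function.Bijective (stairSigmaMap (n := n)) := by
  constructor
  · rintro ⟨j, g, h⟩ ⟨j', g', h'⟩ hxy
    simp only [stairSigmaMap] at hxy
    have hj : j = j' := by
      rw [← minFix_stairGlue j g h, hxy, minFix_stairGlue]
    subst hj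
    have hval : ∀ i, (stairGlue j g h).1 i = (stairGlue j g' h').1 i := fun i => by rw [hxy]
    have hg : g = g' := by
      apply Subtype.ext; funext i
      have hv := hval ⟨i, i.isLt.trans j.isLt⟩
      simp only [stairGlue, dif_pos (show ((⟨(i:ℕ), i.isLt.trans j.isLt⟩ : Fin (n+1)) : ℕ) <
        (j:ℕ) from i.isLt)] at hv
      apply Fin.ext
      have hv' := Fin.ext_iff.1 hv
      simp only [Fin.val_mk] at hv'
      have e1 : (⟨(i:ℕ), i.isLt⟩ : Fin j) = i := Fin.ext rfl
      rw [e1] at hv'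
      omega
    have hh : h = h' := by
      apply Subtype.ext; funext i
      have hv := hval ⟨(j:ℕ) + 1 + i, by have := i.isLt; omega⟩
      have hnlt : ¬ (((⟨(j:ℕ) + 1 + (i:ℕ), by have := i.isLt; omega⟩ : Fin (n+1)) : ℕ) < (j:ℕ)) := by
        simp only [Fin.val_mk]; omega
      have hne : ¬ (((⟨(j:ℕ) + 1 + (i:ℕ), by have := i.isLt; omega⟩ : Fin (n+1)) : ℕ) = (j:ℕ)) := by
        simp only [Fin.val_mk]; omega
      simp only [stairGlue, dif_neg hnlt, dif_neg hne] at hv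
      apply Fin.ext
      have hv' := Fin.ext_iff.1 hv
      simp only [Fin.val_mk] at hv'
      have e1 : ∀ (p : ((⟨(j:ℕ) + 1 + (i:ℕ), by have := i.isLt; omega⟩ : Fin (n+1)) : ℕ) - (j:ℕ) - 1 < n - (j:ℕ)),
          (⟨((⟨(j:ℕ) + 1 + (i:ℕ), by have := i.isLt; omega⟩ : Fin (n+1)) : ℕ) - (j:ℕ) - 1, p⟩ : Fin (n - (j:ℕ))) = i :=
        fun p => Fin.ext (by simp only [Fin.val_mk]; omega)
      rw [e1 _] at hv'
      omega
    rw [hg, hh]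
  · intro f
    exact ⟨⟨minFix f, stairLeft f, stairRight f⟩, stairGlue_split f⟩

lemma stair_card_succ (n : ℕ) :
    Nat.card (Stair (n + 1)) =
      ∑ j : Fin (n + 1), Nat.card (Stair (j : ℕ)) * Nat.card (Stair (n - (j : ℕ))) := by
  rw [← Nat.card_eq_of_bijective _ (stairSigmaMap_bijective (n := n))]
  letI : ∀ j : Fin (n + 1), Fintype (Stair (j : ℕ) × Stair (n - (j : ℕ))) :=
    fun j => Fintype.ofFinite _
  rw [Nat.card_eq_fintype_card, Fintype.card_sigma]
  congr 1
  funext j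
  rw [← Nat.card_eq_fintype_card, Nat.card_prod]

instance : Unique (Stair 0) :=
  ⟨⟨⟨Fin.elim0, fun a => a.elim0, fun a => a.elim0⟩⟩, by
    rintro ⟨f, hf⟩
    apply Subtype.ext
    funext a
    exact a.elim0⟩

lemma stair_card (n : ℕ) : Nat.card (Stair n) = catalan n := by
  induction n using Nat.strong_induction_on with
  | _ n ih =>
    match n with
    | 0 => simp [Nat.card_unique, catalan_zero]
    | n + 1 =>
      rw [stair_card_succ, catalan_succ]
      refine Finset.sum_congr rfl fun j _ => ?_
      rw [ih _ (by have := j.isLt; omega), ih _ (by have := j.isLt; omega)]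

/-- Prefix maximum of a function on `Fin n`. -/
def pmax {n : ℕ} (p : Fin n → Fin n) (i : Fin n) : Fin n :=
  ((Iic i).image p).max' (Finset.Nonempty.image ⟨i, mem_Iic.2 le_rfl⟩ p)

lemma le_pmax {n : ℕ} {p : Fin n → Fin n} {i j : Fin n} (h : j ≤ i) : p j ≤ pmax p i :=
  Finset.le_max' _ _ (mem_image_of_mem p (mem_Iic.2 h))

lemma pmax_le {n : ℕ} {p : Fin n → Fin n} {i a : Fin n} (h : ∀ j, j ≤ i → p j ≤ a) :
    pmax p i ≤ a := by
  apply Finset.max'_le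
  intro y hy
  obtain ⟨j, hj, rfl⟩ := mem_image.1 hy
  exact h j (mem_Iic.1 hj)

lemma pmax_mono {n : ℕ} (p : Fin n → Fin n) : Monotone (pmax p) := by
  intro i j hij
  exact pmax_le fun l hl => le_pmax (hl.trans hij)

lemma exists_pmax {n : ℕ} (p : Fin n → Fin n) (i : Fin n) :
    ∃ j, j ≤ i ∧ p j = pmax p i := by
  have h := Finset.max'_mem ((Iic i).image p) (Finset.Nonempty.image ⟨i, mem_Iic.2 le_rfl⟩ p)
  obtain ⟨j, hj, hpj⟩ := mem_image.1 h
  exact ⟨j, mem_Iic.1 hj, hpj⟩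

lemma le_pmax_self {n : ℕ} {p : Fin n → Fin n} (hp : Function.Injective p) (i : Fin n) :
    i ≤ pmax p i := by
  have hsub : (Iic i).image p ⊆ Iic (pmax p i) := fun x hx => mem_Iic.2 (Finset.le_max' _ _ hx)
  have hc := card_le_card hsub
  rw [Finset.card_image_of_injective _ hp, Fin.card_Iic, Fin.card_Iic] at hc
  rw [Fin.le_def]; omega

/-- Indices where a new (weak) record is set. -/
def nmax {n : ℕ} (m : Fin n → Fin n) : Finset (Fin n) :=
  univ.filter fun i => ∀ j, j < i → m j < m i

lemma nmax_lt {n : ℕ} {m : Fin n → Fin n} {i j : Fin n} (hj : j ∈ nmax m) (hij : i < j) :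
    m i < m j := (mem_filter.1 hj).2 i hij

lemma nmax_injOn {n : ℕ} (m : Fin n → Fin n) : Set.InjOn m (nmax m) := by
  intro i hi j hj he
  rcases lt_trichotomy i j with h | h | h
  · exact absurd he (ne_of_lt (nmax_lt (mem_coe.1 hj) h))
  · exact h
  · exact absurd he.symm (ne_of_lt (nmax_lt (mem_coe.1 hi) h))

lemma amax_card {n : ℕ} (m : Fin n → Fin n) : ((nmax m).image m).card = (nmax m).card :=
  Finset.card_image_of_injOn (nmax_injOn m)

lemma nmax_compl_card {n : ℕ} (m : Fin n → Fin n) :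
    ((nmax m)ᶜ).card = n - (nmax m).card := by
  rw [Finset.card_compl, Fintype.card_fin]

lemma amax_compl_card {n : ℕ} (m : Fin n → Fin n) :
    (((nmax m).image m)ᶜ).card = n - (nmax m).card := by
  rw [Finset.card_compl, Fintype.card_fin, amax_card]

/-- Dichotomy: a permutation attains a new record exactly at the record indices of its
prefix maximum. -/
lemma perm_eq_pmax {n : ℕ} (π : Equiv.Perm (Fin n)) {i : Fin n}
    (hi : i ∈ nmax (pmax ⇑π)) : π i = pmax ⇑π i := by
  obtain ⟨j, hj, hpj⟩ := exists_pmax ⇑π i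
  rcases eq_or_lt_of_le hj with rfl | hlt
  · exact hpj
  · exfalso
    have h1 := nmax_lt hi hlt
    have h2 : π j ≤ pmax ⇑π j := le_pmax le_rfl
    rw [hpj] at h2
    exact absurd (h2.trans_lt h1) (lt_irrefl _)

lemma perm_lt_pmax {n : ℕ} (π : Equiv.Perm (Fin n)) {i : Fin n}
    (hi : i ∉ nmax (pmax ⇑π)) : π i < pmax ⇑π i := by
  have hi' : ∃ j, j < i ∧ pmax ⇑π i ≤ pmax ⇑π j := by
    by_contra hcon
    push_neg at hcon
    exact hi (mem_filter.2 ⟨mem_univ _, hcon⟩)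
  obtain ⟨j, hji, hle⟩ := hi'
  have hmm : pmax ⇑π j = pmax ⇑π i := le_antisymm (pmax_mono _ hji.le) hle
  obtain ⟨j₀, hj₀, hpj₀⟩ := exists_pmax ⇑π j
  have hne : π i ≠ pmax ⇑π i := by
    intro he
    have heq : π i = π j₀ := by rw [he, ← hmm, ← hpj₀]
    have hij₀ : i = j₀ := π.injective heq
    exact absurd hji (by rw [hij₀]; exact not_lt.2 hj₀)
  exact lt_of_le_of_ne (le_pmax le_rfl) hne

lemma lt_of_small {n : ℕ} {π : Equiv.Perm (Fin n)} (hav : Avoids321 π) {j k : Fin n}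
    (hjk : j < k) (hj : π j < pmax ⇑π j) : π j < π k := by
  by_contra hcon
  push_neg at hcon
  have hne : π k ≠ π j := fun he => absurd (π.injective he) (ne_of_gt hjk)
  have hlt : π k < π j := lt_of_le_of_ne hcon hne
  obtain ⟨i₀, hi₀, hp⟩ := exists_pmax ⇑π j
  have h2 : π j < π i₀ := by rw [hp]; exact hj
  have hi₀j : i₀ < j := lt_of_le_of_ne hi₀ fun he => by rw [he] at h2; exact lt_irrefl _ h2
  exact hav ⟨i₀, j, k, hi₀j, hjk, hlt, h2⟩

/-- If the rank is less than the number of elements of `s` below `a`,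
then the corresponding element of `s` is below `a`. -/
lemma orderEmbOfFin_lt_of_rank_lt {α : Type*} [LinearOrder α] {s : Finset α} {k : ℕ}
    (h : s.card = k) (r : Fin k) {a : α}
    (hr : (r : ℕ) < (s.filter (· < a)).card) : s.orderEmbOfFin h r < a := by
  by_contra hc
  push_neg at hc
  have hsub : s.filter (· < a) ⊆ (Iio r).image (s.orderEmbOfFin h) := by
    intro x hx
    rw [mem_filter] at hx
    have hxs : x ∈ Set.range (s.orderEmbOfFin h) := by
      rw [Finset.range_orderEmbOfFin]; exact hx.1
    obtain ⟨r', hr'⟩ := hxs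
    have hrr : r' < r := by
      by_contra hge
      push_neg at hge
      have hmono := ((s.orderEmbOfFin h).strictMono.monotone hge)
      rw [hr'] at hmono
      exact absurd (hc.trans hmono) (not_le.2 hx.2)
    rw [← hr']
    exact mem_image_of_mem _ (mem_Iio.2 hrr)
  have hcard := card_le_card hsub
  have : ((Iio r).image (s.orderEmbOfFin h)).card ≤ (r : ℕ) := by
    calc ((Iio r).image (s.orderEmbOfFin h)).card ≤ (Iio r).card := card_image_le
    _ = (r : ℕ) := Fin.card_Iio r
  omega

lemma rank_orderIsoOfFin_symm {α : Type*} [LinearOrder α] {s : Finset α} {k : ℕ}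
    (h : s.card = k) {x : α} (hx : x ∈ s) :
    (((s.orderIsoOfFin h).symm ⟨x, hx⟩ : Fin k) : ℕ) = (s.filter (· < x)).card := by
  set r := (s.orderIsoOfFin h).symm ⟨x, hx⟩ with hr
  have hxr : s.orderEmbOfFin h r = x := by
    have := (s.orderIsoOfFin h).apply_symm_apply ⟨x, hx⟩
    rw [← hr] at this
    have h2 : ((s.orderIsoOfFin h r : {y // y ∈ s}) : α) = x := by rw [this]
    rwa [Finset.coe_orderIsoOfFin_apply] at h2
  have hset : s.filter (· < x) = (Iio r).image (s.orderEmbOfFin h) := by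
    ext y
    simp only [mem_filter, mem_image, mem_Iio]
    constructor
    · rintro ⟨hys, hyx⟩
      have hyr : y ∈ Set.range (s.orderEmbOfFin h) := by
        rw [Finset.range_orderEmbOfFin]; exact hys
      obtain ⟨r', hr'⟩ := hyr
      refine ⟨r', ?_, hr'⟩
      rw [← (s.orderEmbOfFin h).strictMono.lt_iff_lt, hr', hxr]
      exact hyx
    · rintro ⟨r', hr', rfl⟩
      refine ⟨Finset.orderEmbOfFin_mem _ _ _, ?_⟩
      rw [← hxr]
      exact (s.orderEmbOfFin h).strictMono hr'
  rw [hset, Finset.card_image_of_injective _ (s.orderEmbOfFin h).injective, Fin.card_Iio]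

/-- Build a function from a staircase function: records are placed at record indices,
remaining values fill the remaining positions in increasing order. -/
noncomputable def buildp {n : ℕ} (m : Fin n → Fin n) : Fin n → Fin n := fun i =>
  if hi : i ∈ nmax m then m i
  else ((nmax m).image m)ᶜ.orderEmbOfFin (amax_compl_card m)
    ((((nmax m)ᶜ).orderIsoOfFin (nmax_compl_card m)).symm ⟨i, by rwa [Finset.mem_compl]⟩)

lemma buildp_mem {n : ℕ} (m : Fin n → Fin n) {i : Fin n} (hi : i ∈ nmax m) :
    buildp m i = m i := dif_pos hi

lemma buildp_not_mem {n : ℕ} (m : Fin n → Fin n) {i : Fin n} (hi : i ∉ nmax m) :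
    buildp m i = ((nmax m).image m)ᶜ.orderEmbOfFin (amax_compl_card m)
      ((((nmax m)ᶜ).orderIsoOfFin (nmax_compl_card m)).symm ⟨i, by rwa [Finset.mem_compl]⟩) :=
  dif_neg hi

lemma buildp_not_mem_compl {n : ℕ} (m : Fin n → Fin n) {i : Fin n} (hi : i ∉ nmax m) :
    buildp m i ∈ ((nmax m).image m)ᶜ := by
  rw [buildp_not_mem m hi]
  exact Finset.orderEmbOfFin_mem _ _ _

lemma buildp_inj {n : ℕ} (m : Fin n → Fin n) : Function.Injective (buildp m) := by
  intro i i' he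
  by_cases hi : i ∈ nmax m <;> by_cases hi' : i' ∈ nmax m
  · rw [buildp_mem m hi, buildp_mem m hi'] at he
    exact nmax_injOn m hi hi' he
  · exfalso
    have h1 := buildp_not_mem_compl m hi'
    rw [← he, buildp_mem m hi] at h1
    exact (Finset.mem_compl.1 h1) (mem_image_of_mem m hi)
  · exfalso
    have h1 := buildp_not_mem_compl m hi
    rw [he, buildp_mem m hi'] at h1
    exact (Finset.mem_compl.1 h1) (mem_image_of_mem m hi')
  · rw [buildp_not_mem m hi, buildp_not_mem m hi'] at he
    have h1 := ((nmax m).image m)ᶜ.orderEmbOfFin (amax_compl_card m) |>.injective he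
    have h2 := (((nmax m)ᶜ).orderIsoOfFin (nmax_compl_card m)).symm.injective h1
    exact congrArg Subtype.val h2

/-- Minimal witness of each record value. -/
lemma nmax_witness {n : ℕ} {m : Fin n → Fin n} (hmono : Monotone m) (i : Fin n) :
    ∃ j₀, j₀ ∈ nmax m ∧ j₀ ≤ i ∧ m j₀ = m i := by
  classical
  set T := univ.filter fun j => m j = m i with hT
  have hiT : i ∈ T := by simp [hT]
  have hne : T.Nonempty := ⟨i, hiT⟩
  set j₀ := T.min' hne with hj₀
  have hj₀T : j₀ ∈ T := T.min'_mem hne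
  have hj₀v : m j₀ = m i := (mem_filter.1 hj₀T).2
  refine ⟨j₀, ?_, T.min'_le _ hiT, hj₀v⟩
  refine mem_filter.2 ⟨mem_univ _, fun j hj => ?_⟩
  have h1 : m j ≤ m j₀ := hmono hj.le
  rcases eq_or_lt_of_le h1 with he | h
  · exfalso
    have : j ∈ T := mem_filter.2 ⟨mem_univ _, by rw [he]; exact hj₀v⟩
    exact absurd (T.min'_le _ this) (not_le.2 hj)
  · exact h

/-- Key counting lemma: at non-record indices the built permutation is below `m`. -/
lemma buildp_small {n : ℕ} {m : Fin n → Fin n} (hmono : Monotone m) (hge : ∀ i, i ≤ m i)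
    {i : Fin n} (hi : i ∉ nmax m) : buildp m i < m i := by
  classical
  set N := nmax m with hNdef
  set A := (nmax m).image m with hAdef
  set r := ((Nᶜ).orderIsoOfFin (nmax_compl_card m)).symm ⟨i, by rwa [Finset.mem_compl]⟩ with hrdef
  have hrval : (r : ℕ) = ((Nᶜ).filter (· < i)).card :=
    rank_orderIsoOfFin_symm (nmax_compl_card m) _
  -- counting below i
  have e1 : (Nᶜ).filter (· < i) = (Iio i).filter (· ∉ N) := by
    ext x; simp only [mem_filter, Finset.mem_compl, mem_Iio]; tauto
  have e2 : N.filter (· < i) = (Iio i).filter (· ∈ N) := by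
    ext x; simp only [mem_filter, mem_Iio]; tauto
  have c1 : ((Nᶜ).filter (· < i)).card + (N.filter (· < i)).card = (i : ℕ) := by
    rw [e1, e2, add_comm]
    rw [Finset.card_filter_add_card_filter_not (p := (· ∈ N))]
    · exact Fin.card_Iio i
  -- counting below m i
  have e3 : (Aᶜ).filter (· < m i) = (Iio (m i)).filter (· ∉ A) := by
    ext x; simp only [mem_filter, Finset.mem_compl, mem_Iio]; tauto
  have e4 : A.filter (· < m i) = (Iio (m i)).filter (· ∈ A) := by
    ext x; simp only [mem_filter, mem_Iio]; tauto
  have c2 : ((Aᶜ).filter (· < m i)).card + (A.filter (· < m i)).card = ((m i) : ℕ) := by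
    rw [e3, e4, add_comm]
    rw [Finset.card_filter_add_card_filter_not (p := (· ∈ A))]
    · exact Fin.card_Iio (m i)
  -- A-part below m i is the image of small records
  have c3 : A.filter (· < m i) = (N.filter fun j => m j < m i).image m := by
    ext y
    simp only [hAdef, mem_filter, mem_image]
    constructor
    · rintro ⟨⟨j, hj, rfl⟩, hy⟩
      exact ⟨j, ⟨hj, hy⟩, rfl⟩
    · rintro ⟨j, ⟨hj, hy⟩, rfl⟩
      exact ⟨⟨j, hj, rfl⟩, hy⟩
  have c3card : (A.filter (· < m i)).card = (N.filter fun j => m j < m i).card := by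
    rw [c3]
    exact Finset.card_image_of_injOn ((nmax_injOn m).mono (by
      intro x hx
      exact mem_coe.2 (mem_filter.1 (mem_coe.1 hx)).1))
  -- records with small value sit strictly below i
  have hssub : (N.filter fun j => m j < m i) ⊂ N.filter (· < i) := by
    obtain ⟨j₀, hj₀N, hj₀le, hj₀v⟩ := nmax_witness hmono i
    have hj₀lt : j₀ < i := lt_of_le_of_ne hj₀le fun he => hi (he ▸ hj₀N)
    constructor
    · intro j hj
      rw [mem_filter] at hj ⊢
      refine ⟨hj.1, ?_⟩
      by_contra hc
      push_neg at hc
      exact absurd (hmono hc) (not_le.2 hj.2)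
    · intro hsub
      have hmem : j₀ ∈ N.filter (· < i) := mem_filter.2 ⟨hj₀N, hj₀lt⟩
      have := mem_filter.1 (hsub hmem)
      rw [hj₀v] at this
      exact lt_irrefl _ this.2
  have hclt : (N.filter fun j => m j < m i).card < (N.filter (· < i)).card :=
    Finset.card_lt_card hssub
  have hgei : (i : ℕ) ≤ ((m i) : ℕ) := hge i
  have hrank : (r : ℕ) < ((Aᶜ).filter (· < m i)).card := by omega
  have hfin := orderEmbOfFin_lt_of_rank_lt (amax_compl_card m) r hrank
  rw [buildp_not_mem m hi]
  exact hfin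

lemma pmax_buildp {n : ℕ} {m : Fin n → Fin n} (hmono : Monotone m) (hge : ∀ i, i ≤ m i) :
    pmax (buildp m) = m := by
  funext i
  apply le_antisymm
  · apply pmax_le
    intro j hj
    by_cases hjN : j ∈ nmax m
    · rw [buildp_mem m hjN]; exact hmono hj
    · exact le_of_lt (lt_of_lt_of_le (buildp_small hmono hge hjN) (hmono hj))
  · obtain ⟨j₀, hj₀N, hj₀le, hj₀v⟩ := nmax_witness hmono i
    calc m i = buildp m j₀ := by rw [buildp_mem m hj₀N, hj₀v]
    _ ≤ pmax (buildp m) i := le_pmax hj₀le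

/-- The built permutation. -/
noncomputable def buildPerm {n : ℕ} (m : Fin n → Fin n) : Equiv.Perm (Fin n) :=
  Equiv.ofBijective (buildp m) (Finite.injective_iff_bijective.1 (buildp_inj m))

lemma buildPerm_coe {n : ℕ} (m : Fin n → Fin n) : ⇑(buildPerm m) = buildp m := rfl

lemma buildPerm_avoids {n : ℕ} {m : Fin n → Fin n} (hmono : Monotone m) (hge : ∀ i, i ≤ m i) :
    Avoids321 (buildPerm m) := by
  rintro ⟨i, j, k, hij, hjk, h1, h2⟩
  rw [buildPerm_coe] at h1 h2
  have hpm := pmax_buildp hmono hge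
  -- j is not a record index
  have hjN : j ∉ nmax m := by
    intro hjN
    have : buildp m i ≤ pmax (buildp m) j := le_pmax hij.le
    rw [hpm] at this
    rw [buildp_mem m hjN] at h2
    exact absurd (h2.trans_le this) (lt_irrefl _)
  have hkN : k ∉ nmax m := by
    intro hkN
    have : buildp m j ≤ pmax (buildp m) k := le_pmax hjk.le
    rw [hpm] at this
    rw [buildp_mem m hkN] at h1
    exact absurd (h1.trans_le this) (lt_irrefl _)
  -- but non-record values increase
  rw [buildp_not_mem m hjN, buildp_not_mem m hkN] at h1
  have hlt : (((nmax m)ᶜ).orderIsoOfFin (nmax_compl_card m)).symm ⟨j, by rwa [Finset.mem_compl]⟩ <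
      (((nmax m)ᶜ).orderIsoOfFin (nmax_compl_card m)).symm ⟨k, by rwa [Finset.mem_compl]⟩ := by
    rw [OrderIso.lt_iff_lt]
    exact Subtype.mk_lt_mk.2 hjk
  have := (((nmax m).image m)ᶜ.orderEmbOfFin (amax_compl_card m)).strictMono hlt
  exact absurd (h1.trans this) (lt_irrefl _)

lemma pmax_injective {n : ℕ} {π σ : Equiv.Perm (Fin n)} (hπ : Avoids321 π) (hσ : Avoids321 σ)
    (h : pmax ⇑π = pmax ⇑σ) : π = σ := by
  classical
  have hVcard : (((nmax (pmax ⇑π)).image (pmax ⇑π))ᶜ).card = ((nmax (pmax ⇑π))ᶜ).card := by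
    rw [amax_compl_card, nmax_compl_card]
  have heC : ∀ x, ((nmax (pmax ⇑π))ᶜ).orderEmbOfFin rfl x ∉ nmax (pmax ⇑π) := fun x => by
    have := Finset.orderEmbOfFin_mem ((nmax (pmax ⇑π))ᶜ) rfl x
    rwa [Finset.mem_compl] at this
  have hσsmall : ∀ {i : Fin n}, i ∉ nmax (pmax ⇑π) → σ i < pmax ⇑π i := fun {i} hi => by
    rw [h] at hi ⊢
    exact perm_lt_pmax σ hi
  have hσrec : ∀ {i : Fin n}, i ∈ nmax (pmax ⇑π) → σ i = pmax ⇑π i := fun {i} hi => by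
    rw [h] at hi ⊢
    exact perm_eq_pmax σ hi
  have hmemV : ∀ (τ : Equiv.Perm (Fin n)),
      (∀ {i : Fin n}, i ∈ nmax (pmax ⇑π) → τ i = pmax ⇑π i) →
      ∀ x, τ (((nmax (pmax ⇑π))ᶜ).orderEmbOfFin rfl x) ∈ ((nmax (pmax ⇑π)).image (pmax ⇑π))ᶜ := by
    intro τ hτ x
    rw [Finset.mem_compl]
    intro hmem
    obtain ⟨i', hi', hei'⟩ := mem_image.1 hmem
    have hee : τ (((nmax (pmax ⇑π))ᶜ).orderEmbOfFin rfl x) = τ i' := by rw [hτ hi', hei']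
    exact heC x (τ.injective hee ▸ hi')
  have hπmono : StrictMono (⇑π ∘ ((nmax (pmax ⇑π))ᶜ).orderEmbOfFin rfl) := fun x y hxy => by
    have h1 := (((nmax (pmax ⇑π))ᶜ).orderEmbOfFin rfl).strictMono hxy
    exact lt_of_small hπ h1 (perm_lt_pmax π (heC x))
  have hσmono : StrictMono (⇑σ ∘ ((nmax (pmax ⇑π))ᶜ).orderEmbOfFin rfl) := fun x y hxy => by
    have h1 := (((nmax (pmax ⇑π))ᶜ).orderEmbOfFin rfl).strictMono hxy
    have h2 := hσsmall (heC x)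
    have h2' : σ (((nmax (pmax ⇑π))ᶜ).orderEmbOfFin rfl x) <
        pmax ⇑σ (((nmax (pmax ⇑π))ᶜ).orderEmbOfFin rfl x) := by
      rw [← h]; exact h2
    exact lt_of_small hσ h1 h2'
  have hπu := Finset.orderEmbOfFin_unique hVcard
    (fun x => hmemV π (fun hi => perm_eq_pmax π hi) x) hπmono
  have hσu := Finset.orderEmbOfFin_unique hVcard
    (fun x => hmemV σ (fun hi => hσrec hi) x) hσmono
  apply Equiv.ext
  intro i
  by_cases hi : i ∈ nmax (pmax ⇑π)
  · rw [perm_eq_pmax π hi, hσrec hi]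
  · have hiC : i ∈ (nmax (pmax ⇑π))ᶜ := Finset.mem_compl.2 hi
    have hirange : i ∈ Set.range (((nmax (pmax ⇑π))ᶜ).orderEmbOfFin rfl) := by
      rw [Finset.range_orderEmbOfFin]; exact hiC
    obtain ⟨x, rfl⟩ := hirange
    exact congrFun (hπu.trans hσu.symm) x

theorem stmt16 (n : ℕ) :
    Nat.card {π : Equiv.Perm (Fin n) // Avoids321 π} =
      Nat.choose (2 * n) n / (n + 1) := by
  classical
  have hbij : Function.Bijective (fun x : {π : Equiv.Perm (Fin n) // Avoids321 π} =>
      (⟨pmax ⇑x.1, pmax_mono _, fun i => le_pmax_self x.1.injective i⟩ : Stair n)) := by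
    constructor
    · rintro ⟨π, hπ⟩ ⟨σ, hσ⟩ he
      have h1 : pmax ⇑π = pmax ⇑σ := congrArg Subtype.val he
      exact Subtype.ext (pmax_injective hπ hσ h1)
    · rintro ⟨m, hmono, hge⟩
      refine ⟨⟨buildPerm m, buildPerm_avoids hmono hge⟩, ?_⟩
      apply Subtype.ext
      show pmax ⇑(buildPerm m) = m
      rw [buildPerm_coe]
      exact pmax_buildp hmono hge
  have hc : Nat.card {π : Equiv.Perm (Fin n) // Avoids321 π} = Nat.card (Stair n) :=
    Nat.card_eq_of_bijective _ hbij
  rw [hc, stair_card, catalan_eq_centralBinom_div, Nat.centralBinom]
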